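/- For γ > 0 and every positive integer n, e^{-γ√n} = (γ/(2√π)) ∫_0^∞ p^{-3/2} e^{-γ²/(4p)} e^{-np} dp. -/

import Mathlib

open MeasureTheory Set Real


lemma phi_eq {c u : ℝ} (hc : 0 < c) (hu : 0 < u) :
    -(c/u)^2 - c^2/(c/u)^2 = -u^2 - c^2/u^2 := by
  field_simp
  ring

lemma phi_integrable {c : ℝ} (hc : 0 < c) :
    IntegrableOn (fun u : ℝ => Real.exp (-u^2 - c^2/u^2)) (Ioi 0) := by
  have h : Integrable (fun u : ℝ => Real.exp (-(1:ℝ) * u ^ 2)) := integrable_exp_neg_mul_sq one_pos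
  refine h.integrableOn.mono' ?_ ?_
  · exact (Measurable.aestronglyMeasurable (by measurability)).restrict
  · filter_upwards [ae_restrict_mem measurableSet_Ioi] with u hu
    simp only [Real.norm_eq_abs, abs_of_pos (Real.exp_pos _), neg_one_mul]
    apply Real.exp_le_exp.mpr
    have : 0 ≤ c^2/u^2 := by positivity
    linarith

lemma glasser {c : ℝ} (hc : 0 < c) :
    ∫ u in Ioi (0:ℝ), Real.exp (-u^2 - c^2/u^2)
      = Real.sqrt Real.pi / 2 * Real.exp (-2*c) := by
  set φ : ℝ → ℝ := fun u => Real.exp (-u^2 - c^2/u^2) with hφ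
  have h1 : IntegrableOn φ (Ioi 0) := phi_integrable hc
  -- substitution u ↦ c/u
  have hderiv1 : ∀ u ∈ Ioi (0:ℝ), HasDerivWithinAt (fun u : ℝ => c / u) (-(c / u^2)) (Ioi 0) u := by
    intro u hu
    have h := ((hasDerivAt_inv (ne_of_gt hu)).const_mul c)
    have : HasDerivAt (fun u : ℝ => c / u) (-(c/u^2)) u := by
      simpa [div_eq_mul_inv, neg_div, mul_comm] using h
    exact this.hasDerivWithinAt
  have hinj1 : InjOn (fun u : ℝ => c / u) (Ioi 0) := by
    intro a ha b hb hab
    have ha' : (0:ℝ) < a := ha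
    have hb' : (0:ℝ) < b := hb
    simp only at hab
    rw [div_eq_div_iff (ne_of_gt ha') (ne_of_gt hb')] at hab
    exact (mul_left_cancel₀ (ne_of_gt hc) (by linarith : c * b = c * a)).symm
  have himg1 : (fun u : ℝ => c / u) '' (Ioi 0) = Ioi (0:ℝ) := by
    ext y
    constructor
    · rintro ⟨u, hu, rfl⟩; exact div_pos hc hu
    · intro hy
      exact ⟨c / y, div_pos hc hy, by field_simp⟩
  have h2 : ∫ u in Ioi (0:ℝ), φ u = ∫ u in Ioi (0:ℝ), (c / u^2) * φ u := by
    have := integral_image_eq_integral_abs_deriv_smul measurableSet_Ioi hderiv1 hinj1 φ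
    rw [himg1] at this
    rw [this]
    refine setIntegral_congr_fun measurableSet_Ioi (fun u hu => ?_)
    have hu' : (0:ℝ) < u := hu
    have h3 : φ (c / u) = φ u := by
      simp only [hφ]
      exact congrArg Real.exp (phi_eq hc hu')
    rw [h3, abs_neg, abs_of_pos (by positivity), smul_eq_mul]
  have h3 : IntegrableOn (fun u => (c / u^2) * φ u) (Ioi 0) := by
    have := (integrableOn_image_iff_integrableOn_abs_deriv_smul measurableSet_Ioi hderiv1 hinj1 φ).mp
      (by rw [himg1]; exact h1)
    refine this.congr_fun (fun u hu => ?_) measurableSet_Ioi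
    have hu' : (0:ℝ) < u := hu
    have h3 : φ (c / u) = φ u := by
      simp only [hφ]
      exact congrArg Real.exp (phi_eq hc hu')
    beta_reduce
    rw [h3, abs_neg, abs_of_pos (by positivity), smul_eq_mul]
  -- substitution v = u - c/u
  have hderiv2 : ∀ u ∈ Ioi (0:ℝ),
      HasDerivWithinAt (fun u : ℝ => u - c / u) (1 + c / u^2) (Ioi 0) u := by
    intro u hu
    have hu' : (0:ℝ) < u := hu
    have h := (hasDerivAt_id u).sub ((hasDerivAt_inv (ne_of_gt hu')).const_mul c)
    have : HasDerivAt (fun u : ℝ => u - c / u) (1 + c / u^2) u := by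
      have e : (1 : ℝ) - c * -(u ^ 2)⁻¹ = 1 + c / u^2 := by field_simp; ring
      have hf : (fun u : ℝ => u - c / u) = id - fun y => c * y⁻¹ := by
        funext x; simp [div_eq_mul_inv]
      rw [hf, ← e]; exact h
    exact this.hasDerivWithinAt
  have hinj2 : InjOn (fun u : ℝ => u - c / u) (Ioi 0) := by
    have : StrictMonoOn (fun u : ℝ => u - c / u) (Ioi 0) := by
      intro a ha b hb hab
      have ha' : (0:ℝ) < a := ha
      have hb' : (0:ℝ) < b := hb
      have : c / b < c / a := div_lt_div_of_pos_left hc ha' hab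
      simp only
      linarith
    exact this.injOn
  have himg2 : (fun u : ℝ => u - c / u) '' (Ioi 0) = univ := by
    ext v
    simp only [mem_univ, iff_true]
    have h4 : |v| < Real.sqrt (v^2 + 4*c) := by
      rw [← Real.sqrt_sq_eq_abs]
      exact Real.sqrt_lt_sqrt (sq_nonneg v) (by linarith)
    set s := Real.sqrt (v^2 + 4*c) with hs
    have hs2 : s^2 = v^2 + 4*c := Real.sq_sqrt (by positivity)
    have hu : (0:ℝ) < (v + s) / 2 := by
      have := neg_abs_le v; linarith
    refine ⟨(v + s) / 2, hu, ?_⟩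
    simp only
    have hsv : (0:ℝ) < v + s := by linarith
    have hcd : c / ((v + s)/2) = (s - v)/2 := by
      rw [div_eq_div_iff (by positivity) two_ne_zero]
      nlinarith [hs2]
    rw [hcd]
    ring
  -- gaussian
  have hgauss : ∫ v in (univ : Set ℝ), Real.exp (-v^2) = Real.sqrt Real.pi := by
    rw [setIntegral_univ]
    simpa using integral_gaussian 1
  have h5 : ∫ u in Ioi (0:ℝ), (1 + c/u^2) * Real.exp (-(u - c/u)^2) = Real.sqrt Real.pi := by
    have := integral_image_eq_integral_abs_deriv_smul measurableSet_Ioi hderiv2 hinj2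
      (fun v => Real.exp (-v^2))
    rw [himg2, hgauss] at this
    refine (setIntegral_congr_fun measurableSet_Ioi (fun u hu => ?_)).trans this.symm
    have hu' : (0:ℝ) < u := hu
    rw [abs_of_pos (by positivity), smul_eq_mul]
  -- combine
  have key : ∫ u in Ioi (0:ℝ), (φ u + (c / u^2) * φ u)
      = (∫ u in Ioi (0:ℝ), φ u) + ∫ u in Ioi (0:ℝ), (c / u^2) * φ u :=
    integral_add h1 h3
  have key2 : ∫ u in Ioi (0:ℝ), (φ u + (c / u^2) * φ u)
      = Real.exp (-2*c) * ∫ u in Ioi (0:ℝ), (1 + c/u^2) * Real.exp (-(u - c/u)^2) := by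
    rw [← integral_const_mul]
    refine setIntegral_congr_fun measurableSet_Ioi (fun u hu => ?_)
    have hu' : (0:ℝ) < u := hu
    have e : -u^2 - c^2/u^2 = -(u - c/u)^2 + -(2*c) := by
      field_simp
      ring
    simp only [hφ, e, Real.exp_add]
    ring
  rw [h5] at key2
  rw [key, ← h2] at key2
  linarith

/-- For `γ > 0` and each positive integer `n`,
`e^{-γ√n} = (γ/(2√π)) ∫_0^∞ p^{-3/2} e^{-γ²/(4p)} e^{-np} dp`. -/
theorem stmt2 (γ : ℝ) (hγ : 0 < γ) (n : ℕ) (hn : 0 < n) :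
    Real.exp (-γ * Real.sqrt n) =
      γ / (2 * Real.sqrt Real.pi) *
        ∫ p in Ioi (0 : ℝ),
          p ^ (-(3 : ℝ) / 2) * Real.exp (-γ ^ 2 / (4 * p)) * Real.exp (-(n : ℝ) * p) := by
  set c : ℝ := γ * Real.sqrt n / 2 with hcdef
  have hn' : (0:ℝ) < n := Nat.cast_pos.mpr hn
  have hsn : (0:ℝ) < Real.sqrt n := Real.sqrt_pos.mpr hn'
  have hc : 0 < c := by positivity
  have hc2 : c^2 = n * γ^2 / 4 := by
    rw [hcdef, div_pow, mul_pow, Real.sq_sqrt hn'.le]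
    ring
  set G : ℝ → ℝ := fun p => p ^ (-(3 : ℝ) / 2) * Real.exp (-γ ^ 2 / (4 * p))
      * Real.exp (-(n : ℝ) * p) with hG
  -- substitution p = γ²/(4u²)
  have hderiv : ∀ u ∈ Ioi (0:ℝ),
      HasDerivWithinAt (fun u : ℝ => γ^2 / (4 * u^2)) (-(γ^2 / (2 * u^3))) (Ioi 0) u := by
    intro u hu
    have hu' : (0:ℝ) < u := hu
    have h := ((hasDerivAt_pow 2 u).inv (by positivity)).const_mul (γ^2/4)
    have : HasDerivAt (fun u : ℝ => γ^2 / (4 * u^2)) (-(γ^2 / (2 * u^3))) u := by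
      have e1 : (fun u : ℝ => γ^2/4 * (u^2)⁻¹) = fun u : ℝ => γ^2 / (4 * u^2) := by
        funext x; rw [div_mul_eq_div_div]; ring
      have e2 : γ^2/4 * (-(2 * u ^ (2-1)) / (u^2)^2) = -(γ^2 / (2 * u^3)) := by
        field_simp; ring
      rw [← e1, ← e2]
      exact_mod_cast h
    exact this.hasDerivWithinAt
  have hinj : InjOn (fun u : ℝ => γ^2 / (4 * u^2)) (Ioi 0) := by
    intro a ha b hb hab
    have ha' : (0:ℝ) < a := ha
    have hb' : (0:ℝ) < b := hb
    simp only at hab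
    rw [div_eq_div_iff (by positivity) (by positivity)] at hab
    have h4 : 4 * b^2 = 4 * a^2 := mul_left_cancel₀ (pow_ne_zero 2 (ne_of_gt hγ)) hab
    nlinarith [h4]
  have himg : (fun u : ℝ => γ^2 / (4 * u^2)) '' (Ioi 0) = Ioi (0:ℝ) := by
    ext y
    constructor
    · rintro ⟨u, hu, rfl⟩
      have hu' : (0:ℝ) < u := hu
      have : (0:ℝ) < γ^2 / (4 * u^2) := by positivity
      exact this
    · intro hy
      have hy' : (0:ℝ) < y := hy
      refine ⟨γ / (2 * Real.sqrt y), mem_Ioi.mpr (by positivity), ?_⟩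
      simp only
      rw [div_pow, mul_pow, Real.sq_sqrt hy'.le]
      field_simp
      ring
  have hGsub : ∫ p in Ioi (0:ℝ), G p
      = ∫ u in Ioi (0:ℝ), (4 / γ) * Real.exp (-u^2 - c^2/u^2) := by
    have := integral_image_eq_integral_abs_deriv_smul measurableSet_Ioi hderiv hinj G
    rw [himg] at this
    rw [this]
    refine setIntegral_congr_fun measurableSet_Ioi (fun u hu => ?_)
    have hu' : (0:ℝ) < u := hu
    rw [abs_neg, abs_of_pos (by positivity), smul_eq_mul]
    have hrpow : (γ^2 / (4 * u^2)) ^ (-(3:ℝ)/2) = 8 * u^3 / γ^3 := by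
      have e : γ^2 / (4 * u^2) = (γ / (2*u))^2 := by
        rw [div_pow, mul_pow]; norm_num
      have ht : (0:ℝ) < γ / (2*u) := by positivity
      have estep : (γ^2 / (4 * u^2)) ^ (-(3:ℝ)/2) = (γ/(2*u)) ^ (-3 : ℝ) := by
        rw [e, ← Real.rpow_natCast (γ / (2*u)) 2, ← Real.rpow_mul ht.le]
        norm_num
      rw [estep, Real.rpow_neg ht.le, show (3:ℝ) = ((3:ℕ):ℝ) by norm_num,
        Real.rpow_natCast, div_pow, inv_div, mul_pow]
      norm_num
    have e1 : -γ^2 / (4 * (γ^2 / (4 * u^2))) = -u^2 := by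
      field_simp
    have e2 : -(n:ℝ) * (γ^2 / (4 * u^2)) = -(c^2/u^2) := by
      rw [hc2]; field_simp; try ring
    simp only [hG, hrpow, e1, e2]
    rw [show -u^2 - c^2/u^2 = -u^2 + -(c^2/u^2) by ring, Real.exp_add]
    field_simp
    ring
  rw [hGsub, integral_const_mul, glasser hc]
  have hsp : (0:ℝ) < Real.sqrt Real.pi := Real.sqrt_pos.mpr Real.pi_pos
  have h2c : -2 * c = -γ * Real.sqrt n := by rw [hcdef]; ring
  rw [h2c]
  field_simp
  ring
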